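/- For vectors α, β ∈ [q]^d and γ ∈ ℝ^d: α + β = γ holds if and only if ‖α−β‖² = ‖2α−γ‖² and ‖α−β‖² = ‖2β−γ‖². -/
import Mathlib


/-- For vectors α, β ∈ [q]^d (entries in {0,…,q−1}) and γ ∈ ℝ^d:
α + β = γ iff ‖α−β‖² = ‖2α−γ‖² and ‖α−β‖² = ‖2β−γ‖². -/
theorem stmt_1 (q d : ℕ) (α β γ : EuclideanSpace ℝ (Fin d))
    (hα : ∀ i, ∃ k : ℕ, k < q ∧ α i = k)
    (hβ : ∀ i, ∃ k : ℕ, k < q ∧ β i = k) :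
    α + β = γ ↔
      (‖α - β‖ ^ 2 = ‖(2:ℝ) • α - γ‖ ^ 2 ∧ ‖α - β‖ ^ 2 = ‖(2:ℝ) • β - γ‖ ^ 2) := by
  constructor
  · rintro rfl
    constructor
    · rw [show (2:ℝ) • α - (α + β) = α - β by module]
    · rw [show (2:ℝ) • β - (α + β) = -(α - β) by module, norm_neg]
  · rintro ⟨h1, h2⟩
    set u := α - β with hu
    set v := α + β - γ with hv
    rw [show (2:ℝ) • α - γ = u + v by rw [hu, hv]; module] at h1
    rw [show (2:ℝ) • β - γ = v - u by rw [hu, hv]; module] at h2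
    rw [norm_add_sq_real] at h1
    conv at h2 => rw [show ‖u‖ ^ 2 = ‖u‖ ^ 2 from rfl]; rhs; rw [norm_sub_sq_real]
    rw [real_inner_comm] at h2
    have hv0 : ‖v‖ = 0 := by nlinarith [norm_nonneg v]
    have : v = 0 := norm_eq_zero.mp hv0
    rw [hv, sub_eq_zero] at this
    exact this
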